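/- Let L be a Niemeier lattice with root lattice Q, and let τ ∈ Aut L have order 3. Suppose R₁, R₂, R₃, R₄ are pairwise orthogonal sublattices of Q, each generated by its vectors of norm 2, such that Q = R₁ ⊕ R₂ ⊕ R₃ ⊕ R₄ (internal direct sum) and τ(R₁) = R₂, τ(R₂) = R₃, τ(R₃) = R₁, τ(R₄) = R₄. Let W ≤ Aut L be the subgroup generated by the reflections r_α for α ∈ R₁ ∪ R₂ ∪ R₃ with ⟨α,α⟩ = 2. If w ∈ W and wτ has order 3, then wτ is conjugate to τ in Aut L. -/

import Mathlib

/-- The multiplicative group structure on `AddAut A` (composition) that older Mathlib provided. -/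
instance addAutMulGroupOld {A : Type*} [Add A] : Group (AddAut A) where
  mul g h := AddEquiv.trans h g
  one := AddEquiv.refl _
  inv := AddEquiv.symm
  mul_assoc _ _ _ := rfl
  one_mul _ := rfl
  mul_one _ := rfl
  inv_mul_cancel := AddEquiv.self_trans_symm

theorem addAutOld_mul_apply {A : Type*} [Add A] (f g : AddAut A) (x : A) :
    (f * g) x = f (g x) := rfl

theorem addAutOld_one_apply {A : Type*} [Add A] (x : A) : (1 : AddAut A) x = x := rfl

section Infra
variable {L : Type*} [AddCommGroup L]

/-- The subgroup of fixed points of an automorphism of an abelian group. -/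
def fixedPts (f : AddAut L) : AddSubgroup L where
  carrier := {x | f x = x}
  add_mem' := by
    intro a b ha hb
    simp only [Set.mem_setOf_eq, map_add] at *
    rw [ha, hb]
  zero_mem' := by simp
  neg_mem' := by
    intro a ha
    simp only [Set.mem_setOf_eq, map_neg] at *
    rw [ha]

/-- The isometry group of a `ℤ`-valued form: the group of all automorphisms of the
additive group preserving the form.  For a lattice `(L, B)` this is `Aut L`. -/
def IsometryGrp (B : L → L → ℤ) : Subgroup (AddAut L) where
  carrier := {f | ∀ x y, B (f x) (f y) = B x y}
  one_mem' := by intro x y; rfl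
  mul_mem' := by
    intro a b ha hb x y
    have h : ∀ z, (a * b) z = a (b z) := fun z => rfl
    simp only [Set.mem_setOf_eq] at *
    rw [h, h, ha, hb]
  inv_mem' := by
    intro a ha x y
    simp only [Set.mem_setOf_eq] at *
    have h := ha (a⁻¹ x) (a⁻¹ y)
    have h1 : a (a⁻¹ x) = x := a.apply_symm_apply x
    have h2 : a (a⁻¹ y) = y := a.apply_symm_apply y
    rw [h1, h2] at h
    exact h.symm

/-- The Weyl group of a lattice `(L, B)`: the subgroup generated by the reflections
`r_α : x ↦ x − B(x,α)•α` in the norm-2 vectors `α`. -/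
def WeylGrp (B : L → L → ℤ) : Subgroup (AddAut L) :=
  Subgroup.closure {w | ∃ α : L, B α α = 2 ∧ ∀ x, w x = x - B x α • α}

/-- The root lattice of `(L, B)`: the subgroup generated by the norm-2 vectors. -/
def rootLat (B : L → L → ℤ) : AddSubgroup L :=
  AddSubgroup.closure {α | B α α = 2}

/-- The rank of the fixed-point sublattice of an automorphism. -/
noncomputable def fixedRank (f : AddAut L) : ℕ :=
  Module.finrank ℤ ↥(fixedPts f)

end Infra

/-- An isomorphism of lattices: an isomorphism of the underlying abelian groups
(equivalently, a `ℤ`-linear isomorphism) preserving the forms. -/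
def FormIso {M N : Type*} [AddCommGroup M] [AddCommGroup N]
    (BM : M → M → ℤ) (BN : N → N → ℤ) : Prop :=
  ∃ e : M ≃+ N, ∀ x y, BN (e x) (e y) = BM x y

/-- The standard dot product on `ι → ℤ`. -/
def dotF {ι : Type*} [Fintype ι] (x y : ι → ℤ) : ℤ := ∑ i, x i * y i


section Aux36

variable {L : Type*} [AddCommGroup L]

/-- Reflections with roots in `P`. -/
def refls36 (B : L → L → ℤ) (P : Set L) : Set (AddAut L) :=
  {u | ∃ α ∈ P, ∀ x, u x = x - B x α • α}

/-- Stabilizer of a point in `AddAut L`. -/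
def stab36 (x : L) : Subgroup (AddAut L) where
  carrier := {f | f x = x}
  one_mem' := rfl
  mul_mem' := by
    intro a b ha hb
    simp only [Set.mem_setOf_eq] at *
    rw [addAutOld_mul_apply, hb, ha]
  inv_mem' := by
    intro a ha
    simp only [Set.mem_setOf_eq] at *
    conv_lhs => rw [← ha]
    exact a.symm_apply_apply x

variable {B : L → L → ℤ}

lemma Bsub36 (hadd : ∀ x y z : L, B (x + y) z = B x z + B y z) (x y z : L) :
    B (x - y) z = B x z - B y z := by
  have h := hadd (x - y) y z
  rw [show x - y + y = x from by abel] at h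
  omega

lemma Bsmul36 (hadd : ∀ x y z : L, B (x + y) z = B x z + B y z) (n : ℤ) (x y : L) :
    B (n • x) y = n * B x y := by
  have h := (AddMonoidHom.mk' (fun t => B t y) (fun a b => hadd a b y)).map_zsmul n x
  simpa using h

lemma Bsub36' (hadd : ∀ x y z : L, B (x + y) z = B x z + B y z)
    (hsymm : ∀ x y : L, B x y = B y x) (x y z : L) :
    B x (y - z) = B x y - B x z := by
  rw [hsymm, Bsub36 hadd, hsymm y x, hsymm z x]

lemma Bsmul36' (hadd : ∀ x y z : L, B (x + y) z = B x z + B y z)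
    (hsymm : ∀ x y : L, B x y = B y x) (n : ℤ) (x y : L) :
    B x (n • y) = n * B x y := by
  rw [hsymm, Bsmul36 hadd, hsymm y x]

lemma fix36 (P : Set L) {u : AddAut L} (hu : u ∈ Subgroup.closure (refls36 B P))
    (x : L) (hx : ∀ α ∈ P, B x α = 0) : u x = x := by
  have hle : Subgroup.closure (refls36 B P) ≤ stab36 x := by
    rw [Subgroup.closure_le]
    rintro v ⟨α, hα, hf⟩
    show v x = x
    rw [hf x, hx α hα, zero_smul, sub_zero]
  exact hle hu

lemma isom36 (hadd : ∀ x y z : L, B (x + y) z = B x z + B y z)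
    (hsymm : ∀ x y : L, B x y = B y x) {P : Set L} (hP : ∀ α ∈ P, B α α = 2) :
    Subgroup.closure (refls36 B P) ≤ IsometryGrp B := by
  rw [Subgroup.closure_le]
  rintro u ⟨α, hα, hf⟩
  show ∀ x y, B (u x) (u y) = B x y
  intro x y
  rw [hf x, hf y]
  simp only [Bsub36 hadd, Bsub36' hadd hsymm, Bsmul36 hadd, Bsmul36' hadd hsymm]
  rw [hP α hα, hsymm α y]
  ring

lemma reflcomm36 (hadd : ∀ x y z : L, B (x + y) z = B x z + B y z)
    (hsymm : ∀ x y : L, B x y = B y x) {α β : L} (hab : B α β = 0)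
    {u v : AddAut L} (hu : ∀ x, u x = x - B x α • α) (hv : ∀ x, v x = x - B x β • β) :
    Commute u v := by
  have hba : B β α = 0 := by rw [hsymm]; exact hab
  show u * v = v * u
  refine AddEquiv.ext fun x => ?_
  rw [addAutOld_mul_apply, addAutOld_mul_apply, hv x, hu (x - B x β • β), hu x,
    hv (x - B x α • α)]
  simp only [Bsub36 hadd, Bsmul36 hadd, hab, hba, mul_zero, sub_zero]
  abel

lemma conj36 {τ : AddAut L} (hτ : ∀ x y, B (τ x) (τ y) = B x y) {P P' : Set L}
    (hmap : ∀ α ∈ P, τ α ∈ P') {u : AddAut L}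
    (hu : u ∈ Subgroup.closure (refls36 B P)) :
    τ * u * τ⁻¹ ∈ Subgroup.closure (refls36 B P') := by
  refine Subgroup.closure_induction
    (p := fun v _ => τ * v * τ⁻¹ ∈ Subgroup.closure (refls36 B P')) ?_ ?_ ?_ ?_ hu
  · rintro s ⟨α, hα, hf⟩
    apply Subgroup.subset_closure
    refine ⟨τ α, hmap α hα, fun x => ?_⟩
    have e1 : (τ * s * τ⁻¹) x = τ (s (τ⁻¹ x)) := rfl
    have e2 : τ (τ⁻¹ x) = x := τ.apply_symm_apply x
    have e3 : B (τ⁻¹ x) α = B x (τ α) := by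
      have h := hτ (τ⁻¹ x) α
      rw [e2] at h
      exact h.symm
    rw [e1, hf (τ⁻¹ x), map_sub, map_zsmul, e2, e3]
  · show τ * (1 : AddAut L) * τ⁻¹ ∈ Subgroup.closure (refls36 B P')
    have e : τ * (1 : AddAut L) * τ⁻¹ = 1 := by group
    rw [e]; exact one_mem _
  · intro a b _ _ pa pb
    have e : τ * (a * b) * τ⁻¹ = (τ * a * τ⁻¹) * (τ * b * τ⁻¹) := by group
    rw [e]; exact mul_mem pa pb
  · intro a _ pa
    have e : τ * a⁻¹ * τ⁻¹ = (τ * a * τ⁻¹)⁻¹ := by group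
    rw [e]; exact inv_mem pa

lemma commclos36 {G : Type*} [Group G] {S T : Set G}
    (h : ∀ s ∈ S, ∀ t ∈ T, Commute s t)
    {u v : G} (hu : u ∈ Subgroup.closure S) (hv : v ∈ Subgroup.closure T) :
    Commute u v := by
  refine Subgroup.closure_induction (p := fun u _ => Commute u v) ?_ ?_ ?_ ?_ hu
  · intro s hs
    refine Subgroup.closure_induction (p := fun v _ => Commute s v) (h s hs)
      (Commute.one_right s) (fun a b _ _ pa pb => pa.mul_right pb)
      (fun a _ pa => pa.inv_right) hv
  · exact Commute.one_left v
  · exact fun a b _ _ pa pb => pa.mul_left pb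
  · exact fun a _ pa => pa.inv_left

lemma decomp36 {G : Type*} [Group G] {S0 S1 S2 : Set G}
    (c01 : ∀ u ∈ Subgroup.closure S0, ∀ v ∈ Subgroup.closure S1, Commute u v)
    (c02 : ∀ u ∈ Subgroup.closure S0, ∀ v ∈ Subgroup.closure S2, Commute u v)
    (c12 : ∀ u ∈ Subgroup.closure S1, ∀ v ∈ Subgroup.closure S2, Commute u v)
    {u : G} (hu : u ∈ Subgroup.closure (S0 ∪ S1 ∪ S2)) :
    ∃ a ∈ Subgroup.closure S0, ∃ b ∈ Subgroup.closure S1, ∃ c ∈ Subgroup.closure S2,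
      u = a * b * c := by
  refine Subgroup.closure_induction
    (p := fun u _ => ∃ a ∈ Subgroup.closure S0, ∃ b ∈ Subgroup.closure S1,
      ∃ c ∈ Subgroup.closure S2, u = a * b * c) ?_ ?_ ?_ ?_ hu
  · rintro s ((hs | hs) | hs)
    · exact ⟨s, Subgroup.subset_closure hs, 1, one_mem _, 1, one_mem _, by simp⟩
    · exact ⟨1, one_mem _, s, Subgroup.subset_closure hs, 1, one_mem _, by simp⟩
    · exact ⟨1, one_mem _, 1, one_mem _, s, Subgroup.subset_closure hs, by simp⟩
  · exact ⟨1, one_mem _, 1, one_mem _, 1, one_mem _, by simp⟩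
  · rintro x y _ _ ⟨a, ha, b, hb, c, hc, rfl⟩ ⟨a', ha', b', hb', c', hc', rfl⟩
    refine ⟨a * a', mul_mem ha ha', b * b', mul_mem hb hb', c * c', mul_mem hc hc', ?_⟩
    have hba' : Commute b a' := (c01 a' ha' b hb).symm
    have hca'b' : Commute c (a' * b') :=
      Commute.mul_right (c02 a' ha' c hc).symm (c12 b' hb' c hc).symm
    calc a * b * c * (a' * b' * c') = a * b * (a' * b') * (c * c') :=
          hca'b'.mul_mul_mul_comm (a * b) c'
      _ = a * a' * (b * b') * (c * c') := by rw [hba'.mul_mul_mul_comm a b']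
  · rintro x _ ⟨a, ha, b, hb, c, hc, rfl⟩
    refine ⟨a⁻¹, inv_mem ha, b⁻¹, inv_mem hb, c⁻¹, inv_mem hc, ?_⟩
    have h1 : Commute a⁻¹ b⁻¹ := (c01 a ha b hb).inv_left.inv_right
    have h2 : Commute c⁻¹ a⁻¹ := (c02 a ha c hc).symm.inv_left.inv_right
    have h3 : Commute c⁻¹ b⁻¹ := (c12 b hb c hc).symm.inv_left.inv_right
    rw [mul_inv_rev, mul_inv_rev, ← h1.eq]
    exact ((h2.mul_right h3).eq).trans rfl
  
lemma reflsunion36 (P P' : Set L) :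
    refls36 B (P ∪ P') = refls36 B P ∪ refls36 B P' := by
  ext u
  constructor
  · rintro ⟨α, hα | hα, hf⟩
    exacts [Or.inl ⟨α, hα, hf⟩, Or.inr ⟨α, hα, hf⟩]
  · rintro (⟨α, hα, hf⟩ | ⟨α, hα, hf⟩)
    exacts [⟨α, Or.inl hα, hf⟩, ⟨α, Or.inr hα, hf⟩]

end Aux36

/-- Lemma 3.6: let `L` be a Niemeier lattice with root lattice `Q`, `τ ∈ Aut L` of
order 3, and `R₁, R₂, R₃, R₄` pairwise orthogonal root sublattices with
`Q = R₁ ⊕ R₂ ⊕ R₃ ⊕ R₄`, cyclically permuted (resp. preserved) by `τ` as indicated.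
If `w ∈ W(R₁ ⊕ R₂ ⊕ R₃)` and `wτ` has order 3, then `wτ` is conjugate to `τ` in
`Aut L`. -/
theorem stmt4
    {L : Type*} [AddCommGroup L] [Module.Free ℤ L] [Module.Finite ℤ L]
    (B : L → L → ℤ)
    (hrank : Module.finrank ℤ L = 24)
    (hadd : ∀ x y z : L, B (x + y) z = B x z + B y z)
    (hsymm : ∀ x y : L, B x y = B y x)
    (heven : ∀ x : L, (2 : ℤ) ∣ B x x)
    (hpos : ∀ x : L, x ≠ 0 → 0 < B x x)
    (hunimod : ∀ f : L →+ ℤ, ∃! x : L, ∀ y : L, B x y = f y)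
    (τ : AddAut L) (hτmem : τ ∈ IsometryGrp B) (hord : orderOf τ = 3)
    (R : Fin 4 → AddSubgroup L)
    (hle : ∀ i, R i ≤ rootLat B)
    (hgen : ∀ i, R i = AddSubgroup.closure {α | α ∈ R i ∧ B α α = 2})
    (horth : ∀ i j, i ≠ j → ∀ x ∈ R i, ∀ y ∈ R j, B x y = 0)
    (hsup : R 0 ⊔ R 1 ⊔ R 2 ⊔ R 3 = rootLat B)
    (hind : iSupIndep R)
    (h1 : (R 0).map τ.toAddMonoidHom = R 1)
    (h2 : (R 1).map τ.toAddMonoidHom = R 2)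
    (h3 : (R 2).map τ.toAddMonoidHom = R 0)
    (h4 : (R 3).map τ.toAddMonoidHom = R 3)
    (w : AddAut L)
    (hw : w ∈ Subgroup.closure {u : AddAut L | ∃ α : L,
      (α ∈ R 0 ∨ α ∈ R 1 ∨ α ∈ R 2) ∧ B α α = 2 ∧ ∀ x, u x = x - B x α • α})
    (hword : orderOf (w * τ) = 3) :
    ∃ g ∈ IsometryGrp B, g⁻¹ * (w * τ) * g = τ := by
  classical
  set Q0 : Set L := {α | α ∈ R 0 ∧ B α α = 2} with hQ0def
  set Q1 : Set L := {α | α ∈ R 1 ∧ B α α = 2} with hQ1def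
  set Q2 : Set L := {α | α ∈ R 2 ∧ B α α = 2} with hQ2def
  have hτiso : ∀ x y, B (τ x) (τ y) = B x y := hτmem
  -- the generating set of the theorem is a union of reflection sets
  have hset : {u : AddAut L | ∃ α : L,
      (α ∈ R 0 ∨ α ∈ R 1 ∨ α ∈ R 2) ∧ B α α = 2 ∧ ∀ x, u x = x - B x α • α}
      = refls36 B Q0 ∪ refls36 B Q1 ∪ refls36 B Q2 := by
    rw [← reflsunion36, ← reflsunion36]
    ext u
    constructor
    · rintro ⟨α, (h | h | h), h2, hf⟩
      exacts [⟨α, Or.inl (Or.inl ⟨h, h2⟩), hf⟩, ⟨α, Or.inl (Or.inr ⟨h, h2⟩), hf⟩,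
        ⟨α, Or.inr ⟨h, h2⟩, hf⟩]
    · rintro ⟨α, ((⟨h, h2⟩ | ⟨h, h2⟩) | ⟨h, h2⟩), hf⟩
      exacts [⟨α, Or.inl h, h2, hf⟩, ⟨α, Or.inr (Or.inl h), h2, hf⟩,
        ⟨α, Or.inr (Or.inr h), h2, hf⟩]
  rw [hset] at hw
  -- commutation between the three Weyl groups
  have mkcomm : ∀ (i j : Fin 4), i ≠ j →
      ∀ u ∈ Subgroup.closure (refls36 B {α | α ∈ R i ∧ B α α = 2}),
      ∀ v ∈ Subgroup.closure (refls36 B {α | α ∈ R j ∧ B α α = 2}), Commute u v := by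
    intro i j hij u hu v hv
    refine commclos36 ?_ hu hv
    rintro s ⟨α, hα, hfα⟩ t ⟨β, hβ, hfβ⟩
    exact reflcomm36 hadd hsymm (horth i j hij α hα.1 β hβ.1) hfα hfβ
  have c01 := mkcomm 0 1 (by decide)
  have c02 := mkcomm 0 2 (by decide)
  have c12 := mkcomm 1 2 (by decide)
  obtain ⟨w0, hw0, w1, hw1, w2, hw2, hwdec⟩ := decomp36 c01 c02 c12 hw
  -- conjugation by τ permutes the three reflection sets
  have hmap01 : ∀ α ∈ Q0, τ α ∈ Q1 := by
    rintro α ⟨hm, hn⟩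
    refine ⟨?_, by rw [hτiso α α]; exact hn⟩
    rw [← h1]
    exact AddSubgroup.mem_map.2 ⟨α, hm, rfl⟩
  have hmap12 : ∀ α ∈ Q1, τ α ∈ Q2 := by
    rintro α ⟨hm, hn⟩
    refine ⟨?_, by rw [hτiso α α]; exact hn⟩
    rw [← h2]
    exact AddSubgroup.mem_map.2 ⟨α, hm, rfl⟩
  have hmap20 : ∀ α ∈ Q2, τ α ∈ Q0 := by
    rintro α ⟨hm, hn⟩
    refine ⟨?_, by rw [hτiso α α]; exact hn⟩
    rw [← h3]
    exact AddSubgroup.mem_map.2 ⟨α, hm, rfl⟩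
  have hσw1 : τ * w1 * τ⁻¹ ∈ Subgroup.closure (refls36 B Q2) :=
    conj36 hτiso hmap12 hw1
  have hσw2 : τ * w2 * τ⁻¹ ∈ Subgroup.closure (refls36 B Q0) :=
    conj36 hτiso hmap20 hw2
  have hσσw1 : τ * (τ * w1 * τ⁻¹) * τ⁻¹ ∈ Subgroup.closure (refls36 B Q0) :=
    conj36 hτiso hmap20 hσw1
  -- order facts
  have hτ3 : τ * τ * τ = 1 := by
    have h := pow_orderOf_eq_one τ
    rw [hord, pow_succ, pow_succ, pow_one] at h
    exact h
  have hwτ3 : (w * τ) * ((w * τ) * (w * τ)) = 1 := by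
    have h := pow_orderOf_eq_one (w * τ)
    rw [hword, pow_succ, pow_succ, pow_one] at h
    calc (w * τ) * ((w * τ) * (w * τ)) = (w * τ) * (w * τ) * (w * τ) := by group
      _ = 1 := h
  -- the key conjugation identity
  have hc0g : w0 * (w1 * w2 * (τ * w1 * τ⁻¹)) = (w1 * w2 * (τ * w1 * τ⁻¹)) * w0 := by
    have h01 : Commute w0 w1 := c01 w0 hw0 w1 hw1
    have h02 : Commute w0 w2 := c02 w0 hw0 w2 hw2
    have h0σ : Commute w0 (τ * w1 * τ⁻¹) := c02 w0 hw0 _ hσw1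
    exact ((h01.mul_right h02).mul_right h0σ).eq
  have hkey : (w1 * w2 * (τ * w1 * τ⁻¹))⁻¹ * (w * τ) * (w1 * w2 * (τ * w1 * τ⁻¹))
      = (w0 * (τ * w2 * τ⁻¹) * (τ * (τ * w1 * τ⁻¹) * τ⁻¹)) * τ := by
    rw [hwdec]
    calc (w1 * w2 * (τ * w1 * τ⁻¹))⁻¹ * ((w0 * w1 * w2) * τ) * (w1 * w2 * (τ * w1 * τ⁻¹))
        = (w1 * w2 * (τ * w1 * τ⁻¹))⁻¹ * ((w0 * (w1 * w2 * (τ * w1 * τ⁻¹)))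
            * ((τ * w2 * τ⁻¹) * (τ * (τ * w1 * τ⁻¹) * τ⁻¹))) * τ := by group
      _ = (w1 * w2 * (τ * w1 * τ⁻¹))⁻¹ * (((w1 * w2 * (τ * w1 * τ⁻¹)) * w0)
            * ((τ * w2 * τ⁻¹) * (τ * (τ * w1 * τ⁻¹) * τ⁻¹))) * τ := by rw [hc0g]
      _ = (w0 * (τ * w2 * τ⁻¹) * (τ * (τ * w1 * τ⁻¹) * τ⁻¹)) * τ := by group
  have hA0 : w0 * (τ * w2 * τ⁻¹) * (τ * (τ * w1 * τ⁻¹) * τ⁻¹)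
      ∈ Subgroup.closure (refls36 B Q0) := mul_mem (mul_mem hw0 hσw2) hσσw1
  set A : AddAut L := w0 * (τ * w2 * τ⁻¹) * (τ * (τ * w1 * τ⁻¹) * τ⁻¹) with hAdef
  -- A*τ has order dividing 3
  have h3A : (A * τ) * ((A * τ) * (A * τ)) = 1 := by
    rw [← hkey]
    calc (w1 * w2 * (τ * w1 * τ⁻¹))⁻¹ * (w * τ) * (w1 * w2 * (τ * w1 * τ⁻¹))
          * ((w1 * w2 * (τ * w1 * τ⁻¹))⁻¹ * (w * τ) * (w1 * w2 * (τ * w1 * τ⁻¹))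
          * ((w1 * w2 * (τ * w1 * τ⁻¹))⁻¹ * (w * τ) * (w1 * w2 * (τ * w1 * τ⁻¹))))
        = (w1 * w2 * (τ * w1 * τ⁻¹))⁻¹ * ((w * τ) * ((w * τ) * (w * τ)))
            * (w1 * w2 * (τ * w1 * τ⁻¹)) := by group
      _ = 1 := by rw [hwτ3]; group
  have hAc : A * ((τ * A * τ⁻¹) * (τ * (τ * A * τ⁻¹) * τ⁻¹)) = 1 := by
    have e : A * ((τ * A * τ⁻¹) * (τ * (τ * A * τ⁻¹) * τ⁻¹))
        = ((A * τ) * ((A * τ) * (A * τ))) * (τ * τ * τ)⁻¹ := by group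
    rw [e, h3A, hτ3, inv_one, mul_one]
  have hAinv : A⁻¹ = (τ * A * τ⁻¹) * (τ * (τ * A * τ⁻¹) * τ⁻¹) :=
    inv_eq_of_mul_eq_one_right hAc
  have hσA1 : τ * A * τ⁻¹ ∈ Subgroup.closure (refls36 B Q1) :=
    conj36 hτiso hmap01 hA0
  have hσσA2 : τ * (τ * A * τ⁻¹) * τ⁻¹ ∈ Subgroup.closure (refls36 B Q2) :=
    conj36 hτiso hmap12 hσA1
  -- fixed points of A
  have hfix0 : ∀ x : L, (∀ α ∈ Q0, B x α = 0) → A x = x :=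
    fun x hx => fix36 Q0 hA0 x hx
  have hfixinv : ∀ x : L, (∀ α ∈ Q1, B x α = 0) → (∀ α ∈ Q2, B x α = 0) → A x = x := by
    intro x hx1 hx2
    have e1 : A⁻¹ x = x := by
      rw [hAinv, addAutOld_mul_apply, fix36 Q2 hσσA2 x hx2]
      exact fix36 Q1 hσA1 x hx1
    have e3 : A (A⁻¹ x) = x := A.apply_symm_apply x
    rw [e1] at e3
    exact e3
  have hR0 : R 0 ≤ fixedPts A := by
    intro y hy
    show A y = y
    refine hfixinv y (fun α hα => ?_) (fun α hα => ?_)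
    · rw [hsymm]; exact horth 1 0 (by decide) α hα.1 y hy
    · rw [hsymm]; exact horth 2 0 (by decide) α hα.1 y hy
  have hR1 : R 1 ≤ fixedPts A := by
    intro y hy
    show A y = y
    exact hfix0 y (fun α hα => by rw [hsymm]; exact horth 0 1 (by decide) α hα.1 y hy)
  have hR2 : R 2 ≤ fixedPts A := by
    intro y hy
    show A y = y
    exact hfix0 y (fun α hα => by rw [hsymm]; exact horth 0 2 (by decide) α hα.1 y hy)
  have hR3 : R 3 ≤ fixedPts A := by
    intro y hy
    show A y = y
    exact hfix0 y (fun α hα => by rw [hsymm]; exact horth 0 3 (by decide) α hα.1 y hy)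
  have hQfixle : rootLat B ≤ fixedPts A := by
    rw [← hsup]
    exact sup_le (sup_le (sup_le hR0 hR1) hR2) hR3
  have hfixnorm : ∀ q : L, B q q = 2 → A q = q := by
    intro q hq
    exact hQfixle (AddSubgroup.subset_closure hq)
  have hAiso : ∀ x y, B (A x) (A y) = B x y :=
    isom36 hadd hsymm (fun α (hα : α ∈ Q0) => hα.2) hA0
  -- A is the identity
  have hA1 : A = 1 := by
    refine AddEquiv.ext fun x => ?_
    have hd : ∀ α : L, B α α = 2 → B (A x - x) α = 0 := by
      intro α h2
      have e := hAiso x α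
      rw [hfixnorm α h2] at e
      rw [Bsub36 hadd]
      omega
    have hAd : A (A x - x) = A x - x :=
      hfix0 _ (fun α (hα : α ∈ Q0) => hd α hα.2)
    have hdd : B (A x - x) (A x - x) = 0 := by
      have e := hAiso x (A x - x)
      rw [hAd] at e
      rw [Bsub36 hadd]
      omega
    have hz : A x - x = 0 := by
      by_contra hne
      have := hpos _ hne
      omega
    show A x = (1 : AddAut L) x
    rw [addAutOld_one_apply]
    exact sub_eq_zero.mp hz
  -- conclusion
  have hisom : ∀ (i : Fin 4), Subgroup.closure (refls36 B {α | α ∈ R i ∧ B α α = 2})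
      ≤ IsometryGrp B := fun i => isom36 hadd hsymm (fun α hα => hα.2)
  refine ⟨w1 * w2 * (τ * w1 * τ⁻¹), ?_, ?_⟩
  · exact mul_mem (mul_mem (hisom 1 hw1) (hisom 2 hw2)) (hisom 2 hσw1)
  · rw [hA1, one_mul] at hkey
    exact hkey
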